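/- Let (W,S) be a Coxeter system with S finite and let w ∈ W satisfy w² = 1, w ≠ 1, and ℓ(w) = min{ℓ(vwv⁻¹) : v ∈ W}. Then the parabolic subgroup W_{S(w)} is finite and w is the element of longest length in W_{S(w)}. -/

import Mathlib

open List

namespace Stmt7Aux

variable {B : Type*} {W : Type*} [Group W] {M : CoxeterMatrix B} (cs : CoxeterSystem M W)

local prefix:100 "σ" => cs.simple
local prefix:100 "π" => cs.wordProd
local prefix:100 "ℓ" => cs.length

open Classical in
noncomputable def refPerm (i : B) : Equiv.Perm (W × ZMod 2) where
  toFun x := (σ i * x.1 * σ i, x.2 + if x.1 = σ i then 1 else 0)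
  invFun x := (σ i * x.1 * σ i, x.2 + if x.1 = σ i then 1 else 0)
  left_inv := by
    rintro ⟨t, e⟩
    have h1 : σ i * (σ i * t * σ i) * σ i = t := by
      rw [← mul_assoc, ← mul_assoc, cs.simple_mul_simple_self, one_mul, mul_assoc,
        cs.simple_mul_simple_self, mul_one]
    have h2 : (σ i * t * σ i = σ i) ↔ (t = σ i) := by
      constructor
      · intro h
        have := congrArg (fun x => σ i * x * σ i) h
        simpa [h1, ← mul_assoc, cs.simple_mul_simple_self] using this
      · rintro rfl; simp [cs.simple_mul_simple_self]
    have h3 : ∀ e : ZMod 2, e + 1 + 1 = e := by decide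
    simp only [h1, h2]
    by_cases ht : t = σ i <;> simp [ht, h3]
  right_inv := by
    rintro ⟨t, e⟩
    have h1 : σ i * (σ i * t * σ i) * σ i = t := by
      rw [← mul_assoc, ← mul_assoc, cs.simple_mul_simple_self, one_mul, mul_assoc,
        cs.simple_mul_simple_self, mul_one]
    have h2 : (σ i * t * σ i = σ i) ↔ (t = σ i) := by
      constructor
      · intro h
        have := congrArg (fun x => σ i * x * σ i) h
        simpa [h1, ← mul_assoc, cs.simple_mul_simple_self] using this
      · rintro rfl; simp [cs.simple_mul_simple_self]
    have h3 : ∀ e : ZMod 2, e + 1 + 1 = e := by decide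
    simp only [h1, h2]
    by_cases ht : t = σ i <;> simp [ht, h3]

lemma conj_eq_iff (a y t : W) : (a * t * a⁻¹ = y) ↔ (t = a⁻¹ * y * a) := by
  constructor
  · rintro rfl; group
  · rintro rfl; group

lemma sandwich (i : B) (x : W) : σ i * (σ i * x * σ i) * σ i = x := by
  rw [← mul_assoc, ← mul_assoc, cs.simple_mul_simple_self, one_mul, mul_assoc,
    cs.simple_mul_simple_self, mul_one]

lemma conj_simple_eq_simple_iff (i : B) (x : W) : (σ i * x * σ i = σ i) ↔ x = σ i := by
  constructor
  · intro h
    have h2 := congrArg (fun y => σ i * y * σ i) h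
    rw [sandwich] at h2
    rw [cs.simple_mul_simple_self, one_mul] at h2
    exact h2
  · rintro rfl
    rw [cs.simple_mul_simple_self, one_mul]

lemma simple_shift (i j : B) (k : ℕ) :
    σ j * (σ i * σ j) ^ k = (σ j * σ i) ^ k * σ j := by
  induction k with
  | zero => simp
  | succ k ih =>
    rw [pow_succ, ← mul_assoc, ih, pow_succ]
    group

lemma pow_inv_eq (i j : B) (k : ℕ) : ((σ i * σ j) ^ k)⁻¹ = (σ j * σ i) ^ k := by
  rw [← inv_pow, mul_inv_rev, cs.inv_simple, cs.inv_simple]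

lemma id1 (i j : B) (k : ℕ) :
    ((σ i * σ j) ^ k)⁻¹ * σ j * (σ i * σ j) ^ k = (σ j * σ i) ^ (2 * k) * σ j := by
  rw [pow_inv_eq, mul_assoc, simple_shift, two_mul, pow_add, mul_assoc]

lemma id2 (i j : B) (k : ℕ) :
    (σ j * (σ i * σ j) ^ k)⁻¹ * σ i * (σ j * (σ i * σ j) ^ k) =
      (σ j * σ i) ^ (2 * k + 1) * σ j := by
  rw [mul_inv_rev, pow_inv_eq, cs.inv_simple]
  have h1 : σ j * (σ i * (σ j * (σ i * σ j) ^ k)) = (σ j * σ i) ^ (k + 1) * σ j := by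
    rw [simple_shift, pow_succ']
    simp [mul_assoc]
  calc (σ j * σ i) ^ k * σ j * σ i * (σ j * (σ i * σ j) ^ k)
      = (σ j * σ i) ^ k * (σ j * (σ i * (σ j * (σ i * σ j) ^ k))) := by
        simp [mul_assoc]
    _ = (σ j * σ i) ^ k * ((σ j * σ i) ^ (k + 1) * σ j) := by rw [h1]
    _ = (σ j * σ i) ^ (2 * k + 1) * σ j := by
        rw [← mul_assoc, ← pow_add]
        congr 2
        omega


open Classical in
lemma refPerm_apply (i : B) (t : W) (e : ZMod 2) :
    refPerm cs i (t, e) = (σ i * t * σ i, e + if t = σ i then 1 else 0) := rfl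

open Classical in
lemma refPerm_pow_apply (i j : B) (k : ℕ) (t : W) (e : ZMod 2) :
    ((refPerm cs i * refPerm cs j) ^ k) (t, e) =
      ((σ i * σ j) ^ k * t * ((σ i * σ j) ^ k)⁻¹,
        e + ∑ r ∈ Finset.range (2 * k),
          if t = (σ j * σ i) ^ r * σ j then 1 else 0) := by
  induction k with
  | zero => simp
  | succ k ih =>
    rw [pow_succ', Equiv.Perm.mul_apply, ih, Equiv.Perm.mul_apply, refPerm_apply, refPerm_apply]
    dsimp only
    have hc1 : (((σ i * σ j) ^ k * t * ((σ i * σ j) ^ k)⁻¹ = σ j)) ↔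
        (t = (σ j * σ i) ^ (2 * k) * σ j) := by
      rw [conj_eq_iff, id1]
    have hc2 : ((σ j * ((σ i * σ j) ^ k * t * ((σ i * σ j) ^ k)⁻¹) * σ j = σ i)) ↔
        (t = (σ j * σ i) ^ (2 * k + 1) * σ j) := by
      have : σ j * ((σ i * σ j) ^ k * t * ((σ i * σ j) ^ k)⁻¹) * σ j
          = (σ j * (σ i * σ j) ^ k) * t * (σ j * (σ i * σ j) ^ k)⁻¹ := by
        rw [mul_inv_rev, cs.inv_simple]
        simp [mul_assoc]
      rw [this, conj_eq_iff, id2]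
    rw [hc1, hc2]
    have hrange : 2 * (k + 1) = (2 * k) + 1 + 1 := by ring
    rw [hrange, Finset.sum_range_succ, Finset.sum_range_succ, Prod.mk.injEq]
    refine ⟨?_, ?_⟩
    · -- first components
      rw [pow_succ']
      simp [mul_assoc, mul_inv_rev, cs.inv_simple]
    · -- second components
      ring

open Classical in
lemma refPerm_liftable : M.IsLiftable (fun i => refPerm cs i) := by
  intro i j
  apply Equiv.ext
  rintro ⟨t, e⟩
  rw [refPerm_pow_apply, Equiv.Perm.one_apply, Prod.mk.injEq]
  refine ⟨?_, ?_⟩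
  · rw [cs.simple_mul_simple_pow]
    group
  · have hsplit : 2 * M i j = M i j + M i j := by ring
    rw [hsplit, Finset.sum_range_add]
    have heq : ∀ r : ℕ, (if t = (σ j * σ i) ^ (M i j + r) * σ j then (1 : ZMod 2) else 0)
        = if t = (σ j * σ i) ^ r * σ j then 1 else 0 := by
      intro r
      rw [pow_add, cs.simple_mul_simple_pow', one_mul]
    simp only [heq]
    have h0 : ∀ x y : ZMod 2, x + (y + y) = x := by decide
    exact h0 e _

noncomputable def phi : W →* Equiv.Perm (W × ZMod 2) :=
  cs.lift ⟨fun i => refPerm cs i, refPerm_liftable cs⟩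

lemma phi_simple (i : B) : phi cs (σ i) = refPerm cs i :=
  cs.lift_apply_simple (refPerm_liftable cs) i

open Classical in
lemma phi_wordProd (ω : List B) (t : W) (e : ZMod 2) :
    phi cs (π ω) (t, e) = (π ω * t * (π ω)⁻¹, e + ((cs.rightInvSeq ω).count t : ZMod 2)) := by
  induction ω generalizing e with
  | nil => simp [cs.wordProd_nil]
  | cons i ω ih =>
    rw [cs.wordProd_cons, map_mul, Equiv.Perm.mul_apply, ih, phi_simple, refPerm_apply]
    have hris : cs.rightInvSeq (i :: ω) = ((π ω)⁻¹ * σ i * π ω) :: cs.rightInvSeq ω := rfl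
    rw [hris, List.count_cons, Prod.mk.injEq]
    have hiff : (t = (π ω)⁻¹ * σ i * π ω) ↔ (π ω * t * (π ω)⁻¹ = σ i) := by
      constructor
      · intro h; rw [h]; group
      · intro h
        rw [← h]; group
    refine ⟨?_, ?_⟩
    · rw [mul_inv_rev, cs.inv_simple]
      group
    · simp only [beq_iff_eq, eq_comm (a := (π ω)⁻¹ * σ i * π ω)]
      rw [hiff]
      by_cases hcase : π ω * t * (π ω)⁻¹ = σ i
      · rw [if_pos hcase, if_pos hcase]
        push_cast; ring
      · rw [if_neg hcase, if_neg hcase]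
        push_cast; ring

noncomputable def eta (u t : W) : ZMod 2 := (phi cs u (t, 0)).2

open Classical in
lemma eta_eq_count (ω : List B) (t : W) :
    eta cs (π ω) t = ((cs.rightInvSeq ω).count t : ZMod 2) := by
  unfold eta
  rw [phi_wordProd]
  simp

lemma phi_apply (u t : W) (e : ZMod 2) :
    phi cs u (t, e) = (u * t * u⁻¹, e + eta cs u t) := by
  obtain ⟨ω, rfl⟩ := cs.wordProd_surjective u
  rw [phi_wordProd, eta_eq_count]

open Classical in
lemma eta_eq_zero_of_not_mem {ω : List B} {t : W} (h : t ∉ cs.rightInvSeq ω) :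
    eta cs (π ω) t = 0 := by
  rw [eta_eq_count, List.count_eq_zero_of_not_mem h]
  simp

open Classical in
lemma mem_of_eta_eq_one {ω : List B} {t : W} (h : eta cs (π ω) t = 1) :
    t ∈ cs.rightInvSeq ω := by
  by_contra hn
  rw [eta_eq_zero_of_not_mem cs hn] at h
  exact (by decide : ((0 : ZMod 2) ≠ 1)) h

open Classical in
lemma eta_refl_self {t : W} (ht : cs.IsReflection t) : eta cs t t = 1 := by
  obtain ⟨v, c, rfl⟩ := ht
  obtain ⟨l, rfl⟩ := cs.wordProd_surjective v
  induction l with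
  | nil =>
    simp only [cs.wordProd_nil, one_mul, inv_one, mul_one]
    unfold eta
    rw [phi_simple, refPerm_apply, if_pos rfl]
    simp
  | cons a m ih =>
    set t' := π m * σ c * (π m)⁻¹ with ht'
    have key : π (a :: m) * σ c * (π (a :: m))⁻¹ = σ a * t' * σ a := by
      rw [cs.wordProd_cons, mul_inv_rev, cs.inv_simple, ht']
      simp [mul_assoc]
    rw [key]
    set x := σ a * t' * σ a with hx
    have hxa : σ a * x * σ a = t' := by
      rw [hx, ← mul_assoc, ← mul_assoc, cs.simple_mul_simple_self, one_mul, mul_assoc,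
        cs.simple_mul_simple_self, mul_one]
    have hiff : (x = σ a) ↔ (t' = σ a) := by
      constructor
      · intro h; rw [← hxa, h, cs.simple_mul_simple_self, one_mul]
      · intro h; rw [hx, h, cs.simple_mul_simple_self, one_mul]
    have hsplit : phi cs x = phi cs (σ a) * phi cs t' * phi cs (σ a) := by
      rw [hx, map_mul, map_mul]
    have step1 : phi cs (σ a) (x, 0) = (t', if x = σ a then 1 else 0) := by
      rw [phi_simple, refPerm_apply, hxa, zero_add]
    have step2 : phi cs t' (t', (if x = σ a then (1 : ZMod 2) else 0))
        = (t', (if x = σ a then 1 else 0) + 1) := by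
      rw [phi_apply, mul_inv_cancel_right, ih]
    have step3 : phi cs (σ a) (t', (if x = σ a then (1 : ZMod 2) else 0) + 1)
        = (x, (if x = σ a then (1 : ZMod 2) else 0) + 1 + if t' = σ a then 1 else 0) := by
      rw [phi_simple, refPerm_apply, ← hx]
    unfold eta
    rw [hsplit, Equiv.Perm.mul_apply, Equiv.Perm.mul_apply, step1, step2, step3]
    have d1 : ((1 : ZMod 2) + 1 + 1) = 1 := by decide
    have d2 : ((0 : ZMod 2) + 1 + 0) = 1 := by decide
    by_cases hc : t' = σ a
    · rw [if_pos hc, if_pos (hiff.mpr hc)]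
      exact d1
    · rw [if_neg hc, if_neg (fun h => hc (hiff.mp h))]
      exact d2

open Classical in
lemma isRightInversion_iff_mem_ris {ω : List B} (hω : cs.IsReduced ω) {t : W} :
    cs.IsRightInversion (π ω) t ↔ t ∈ cs.rightInvSeq ω := by
  constructor
  · rintro ⟨hrefl, hlen⟩
    apply mem_of_eta_eq_one
    obtain ⟨κ, hκred, hκ⟩ := cs.exists_reduced_word' (π ω * t)
    have hdec : π ω = (π ω * t) * t := by
      rw [mul_assoc, hrefl.mul_self, mul_one]
    have hsnd : phi cs (π ω) (t, 0) = ((π ω * t) * t * ((π ω * t))⁻¹,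
        1 + eta cs (π ω * t) t) := by
      nth_rewrite 1 [hdec]
      rw [map_mul, Equiv.Perm.mul_apply, phi_apply cs t t 0, mul_inv_cancel_right,
        eta_refl_self cs hrefl, zero_add, phi_apply]
    have hnotmem : t ∉ cs.rightInvSeq κ := by
      intro hmem
      have := (cs.isRightInversion_of_mem_rightInvSeq hκred hmem).2
      rw [← hκ, mul_assoc, hrefl.mul_self, mul_one] at this
      omega
    have hz : eta cs (π ω * t) t = 0 := by
      rw [hκ]
      exact eta_eq_zero_of_not_mem cs hnotmem
    unfold eta
    rw [hsnd]
    simp [hz]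
  · exact cs.isRightInversion_of_mem_rightInvSeq hω

lemma exchange {ω : List B} (hω : cs.IsReduced ω) {t : W}
    (h : cs.IsRightInversion (π ω) t) :
    ∃ j < ω.length, π ω * t = π (ω.eraseIdx j) := by
  have hmem := (isRightInversion_iff_mem_ris cs hω).mp h
  obtain ⟨j, hj, hget⟩ := List.mem_iff_getElem.mp hmem
  have hj' : j < ω.length := by simpa using hj
  refine ⟨j, hj', ?_⟩
  have := cs.wordProd_mul_getD_rightInvSeq ω j
  rwa [List.getD_eq_getElem _ _ hj, hget] at this

lemma isRightInversion_mul_simple_iff_aux (u : W) (i : B) {t : W} (ht : cs.IsReflection t)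
    (hne : t ≠ σ i) (hasc : ℓ u < ℓ (u * σ i)) :
    (cs.IsRightInversion (u * σ i) t ↔ cs.IsRightInversion u (σ i * t * σ i)) := by
  obtain ⟨ω, hred, rfl⟩ := cs.exists_reduced_word' u
  have hlen : ℓ (π ω * σ i) = ω.length + 1 := by
    rcases cs.length_mul_simple (π ω) i with h | h
    · rw [h, hred]
    · omega
  have hconcat : π (ω.concat i) = π ω * σ i := cs.wordProd_concat i ω
  have hredc : cs.IsReduced (ω.concat i) := by
    unfold CoxeterSystem.IsReduced
    rw [hconcat, hlen, List.length_concat]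
  have h1 : cs.IsRightInversion (π ω * σ i) t ↔ t ∈ cs.rightInvSeq (ω.concat i) := by
    rw [← hconcat]
    exact isRightInversion_iff_mem_ris cs hredc
  rw [h1, cs.rightInvSeq_concat, isRightInversion_iff_mem_ris cs hred]
  rw [List.concat_eq_append, List.mem_append, List.mem_singleton]
  constructor
  · intro hmem
    rcases hmem with hmem' | heq
    · obtain ⟨r, hr, hrt⟩ := List.mem_map.mp hmem'
      have : r = σ i * t * σ i := by
        rw [← hrt]
        simp only [MulAut.conj_apply, cs.inv_simple]
        rw [sandwich]
      rwa [← this]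
    · exact absurd heq hne
  · intro hmem
    left
    apply List.mem_map.mpr
    refine ⟨σ i * t * σ i, hmem, ?_⟩
    simp only [MulAut.conj_apply, cs.inv_simple]
    exact sandwich cs i t

lemma isRightInversion_mul_simple_iff (u : W) (i : B) {t : W} (ht : cs.IsReflection t)
    (hne : t ≠ σ i) :
    (cs.IsRightInversion (u * σ i) t ↔ cs.IsRightInversion u (σ i * t * σ i)) := by
  rcases lt_or_gt_of_ne (cs.length_mul_simple_ne u i) with hlt | hgt
  · -- descent case : ℓ (u * σ i) < ℓ u
    have hasc : ℓ (u * σ i) < ℓ ((u * σ i) * σ i) := by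
      rwa [mul_assoc, cs.simple_mul_simple_self, mul_one]
    have hrefl2 : cs.IsReflection (σ i * t * σ i) := by
      have := ht.conj (σ i)
      rwa [cs.inv_simple] at this
    have hne2 : σ i * t * σ i ≠ σ i := fun h =>
      hne ((conj_simple_eq_simple_iff cs i t).mp h)
    have haux := isRightInversion_mul_simple_iff_aux cs (u * σ i) i hrefl2 hne2 hasc
    rw [mul_assoc, cs.simple_mul_simple_self, mul_one, sandwich] at haux
    exact haux.symm
  · exact isRightInversion_mul_simple_iff_aux cs u i ht hne hgt

lemma ris_cons (i : B) (ω : List B) :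
    cs.rightInvSeq (i :: ω) = ((π ω)⁻¹ * σ i * π ω) :: cs.rightInvSeq ω := rfl

lemma isRightInversion_simple_mul_of (u : W) (i : B) {t : W}
    (h : cs.IsRightInversion u t) (hne : u * t * u⁻¹ ≠ σ i) :
    cs.IsRightInversion (σ i * u) t := by
  rcases lt_or_gt_of_ne (cs.length_simple_mul_ne u i) with hlt | hgt
  · -- descent case: ℓ (σ i * u) < ℓ u
    set u' := σ i * u with hu'
    have huu : σ i * u' = u := by
      rw [hu', ← mul_assoc, cs.simple_mul_simple_self, one_mul]
    obtain ⟨κ, hκred, hκ⟩ := cs.exists_reduced_word' u'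
    have hlen' : ℓ u' + 1 = ℓ u := by
      rcases cs.length_simple_mul u i with hd | hd <;> rw [← hu'] at hd <;> omega
    have hπ : π (i :: κ) = u := by rw [cs.wordProd_cons, ← hκ, huu]
    have hred : cs.IsReduced (i :: κ) := by
      unfold CoxeterSystem.IsReduced
      rw [hπ, List.length_cons, ← hκred, ← hκ]
      omega
    have hmem : t ∈ cs.rightInvSeq (i :: κ) := by
      apply (isRightInversion_iff_mem_ris cs hred).mp
      rwa [hπ]
    rw [ris_cons, List.mem_cons] at hmem
    rcases hmem with heq | hmem'
    · exfalso
      apply hne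
      rw [heq, ← hκ, ← huu]
      group
    · have := cs.isRightInversion_of_mem_rightInvSeq hκred hmem'
      rwa [← hκ] at this
  · -- ascent case: ℓ u < ℓ (σ i * u)
    obtain ⟨ω, hred, rfl⟩ := cs.exists_reduced_word' u
    have hπ : π (i :: ω) = σ i * π ω := cs.wordProd_cons i ω
    have hred2 : cs.IsReduced (i :: ω) := by
      unfold CoxeterSystem.IsReduced
      rw [hπ, List.length_cons]
      rcases cs.length_simple_mul (π ω) i with hd | hd
      · rw [hd, hred]
      · omega
    have hmem : t ∈ cs.rightInvSeq (i :: ω) := by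
      rw [ris_cons, List.mem_cons]
      right
      exact (isRightInversion_iff_mem_ris cs hred).mp h
    have := cs.isRightInversion_of_mem_rightInvSeq hred2 hmem
    rwa [hπ] at this

lemma exists_reduced_subword : ∀ (n : ℕ) (ω : List B), ω.length ≤ n →
    ∃ ν, cs.IsReduced ν ∧ π ν = π ω ∧ ∀ b ∈ ν, b ∈ ω := by
  intro n
  induction n with
  | zero =>
    intro ω hω
    have : ω = [] := List.length_eq_zero_iff.mp (Nat.le_zero.mp hω)
    subst this
    exact ⟨[], by simp [CoxeterSystem.IsReduced], rfl, by simp⟩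
  | succ n ih =>
    intro ω hω
    by_cases hredω : cs.IsReduced ω
    · exact ⟨ω, hredω, rfl, fun b hb => hb⟩
    · have hbad : ¬ cs.IsReduced (ω.take ω.length) := by rwa [List.take_length]
      have hfind : ∀ m : ℕ, ¬ cs.IsReduced (ω.take m) →
          ∃ j < m, cs.IsReduced (ω.take j) ∧ ¬ cs.IsReduced (ω.take (j+1)) := by
        intro m
        induction m with
        | zero =>
          intro h
          exact absurd (by simp [CoxeterSystem.IsReduced]) h
        | succ m ihm =>
          intro h
          by_cases hm : cs.IsReduced (ω.take m)
          · exact ⟨m, Nat.lt_succ_self m, hm, h⟩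
          · obtain ⟨j, hj, h1, h2⟩ := ihm hm
            exact ⟨j, Nat.lt_succ_of_lt hj, h1, h2⟩
      obtain ⟨j, hjlen, hredtake, hbadtake⟩ := hfind ω.length hbad
      have htake : ω.take (j+1) = ω.take j ++ [ω[j]] := by
        rw [List.take_succ]
        simp [List.getElem?_eq_getElem hjlen]
      have hu : π (ω.take (j+1)) = π (ω.take j) * σ (ω[j]) := by
        rw [htake, cs.wordProd_append, cs.wordProd_singleton]
      have hlentakej : (ω.take j).length = j := by
        rw [List.length_take]
        omega
      have hlentake : ℓ (π (ω.take j)) = j := by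
        rw [hredtake, hlentakej]
      have hdesc : ℓ (π (ω.take j) * σ (ω[j])) < ℓ (π (ω.take j)) := by
        rcases cs.length_mul_simple (π (ω.take j)) (ω[j]) with hd | hd
        · exfalso
          apply hbadtake
          unfold CoxeterSystem.IsReduced
          rw [hu, hd, hlentake, List.length_take]
          omega
        · omega
      obtain ⟨j', hj', herase⟩ := exchange cs hredtake
        ⟨cs.isReflection_simple (ω[j]), hdesc⟩
      set ν₀ := (ω.take j).eraseIdx j' ++ ω.drop (j+1) with hν₀
      have hπν : π ν₀ = π ω := by
        conv_rhs => rw [← List.take_append_drop (j+1) ω]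
        rw [hν₀, cs.wordProd_append, cs.wordProd_append, ← herase, hu]
      have herlen : ((ω.take j).eraseIdx j').length + 1 = j := by
        rw [List.length_eraseIdx_add_one (by omega : j' < (ω.take j).length)]
        exact hlentakej
      have hlenν : ν₀.length ≤ n := by
        rw [hν₀, List.length_append, List.length_drop]
        omega
      obtain ⟨ν, h1, h2, h3⟩ := ih ν₀ hlenν
      refine ⟨ν, h1, h2.trans hπν, fun b hb => ?_⟩
      have hb0 := h3 b hb
      rw [hν₀, List.mem_append] at hb0
      rcases hb0 with hb1 | hb1
      · exact (List.take_sublist j ω).subset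
          ((List.eraseIdx_sublist (ω.take j) j').subset hb1)
      · exact (List.drop_sublist (j+1) ω).subset hb1

lemma exists_word_of_mem_closure {S : Set B} {v : W}
    (h : v ∈ Subgroup.closure (cs.simple '' S)) :
    ∃ l : List B, (∀ b ∈ l, b ∈ S) ∧ v = π l := by
  induction h using Subgroup.closure_induction with
  | mem x hx =>
    obtain ⟨b, hb, rfl⟩ := hx
    exact ⟨[b], by simpa using hb, (cs.wordProd_singleton b).symm⟩
  | one => exact ⟨[], by simp, (cs.wordProd_nil).symm⟩
  | mul x y hx hy ihx ihy =>
    obtain ⟨l1, hl1, rfl⟩ := ihx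
    obtain ⟨l2, hl2, rfl⟩ := ihy
    refine ⟨l1 ++ l2, fun b hb => ?_, (cs.wordProd_append l1 l2).symm⟩
    rcases List.mem_append.mp hb with hb | hb
    · exact hl1 b hb
    · exact hl2 b hb
  | inv x hx ihx =>
    obtain ⟨l, hl, rfl⟩ := ihx
    refine ⟨l.reverse, fun b hb => hl b (List.mem_reverse.mp hb), ?_⟩
    rw [cs.wordProd_reverse]

theorem main [Finite B] (w : W) (hw2 : w * w = 1)
    (hmin : ∀ v : W, ℓ w ≤ ℓ (v * w * v⁻¹)) (ω : List B) (hred : cs.IsReduced ω)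
    (hπ : w = π ω) :
    (Subgroup.closure (cs.simple '' {b : B | b ∈ ω}) : Set W).Finite ∧
      ∀ v ∈ Subgroup.closure (cs.simple '' {b : B | b ∈ ω}), ℓ v ≤ ℓ w := by
  have winv : w⁻¹ = w := inv_eq_of_mul_eq_one_right hw2
  have hLR : ∀ i : B, cs.IsLeftDescent w i → ℓ (w * σ i) < ℓ w := by
    intro i hi
    have h1 : (w * σ i)⁻¹ = σ i * w := by rw [mul_inv_rev, cs.inv_simple, winv]
    have h2 : ℓ (w * σ i) = ℓ (σ i * w) := by rw [← cs.length_inv (w * σ i), h1]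
    rw [h2]
    exact hi
  -- Step 1: every left descent commutes with w
  have step1 : ∀ i : B, cs.IsLeftDescent w i → σ i * w = w * σ i := by
    intro i hi
    have hri : ℓ (w * σ i) < ℓ w := hLR i hi
    have hlen1 : ℓ (σ i * w) + 1 = ℓ w := by
      rcases cs.length_simple_mul w i with hd | hd
      · exfalso; unfold CoxeterSystem.IsLeftDescent at hi; omega
      · exact hd
    obtain ⟨l, hlred, hl⟩ := cs.exists_reduced_word' (σ i * w)
    have hll : l.length = ℓ (σ i * w) := by rw [hl]; exact hlred.symm
    have hπκ : π (i :: l) = w := by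
      rw [cs.wordProd_cons, ← hl, ← mul_assoc, cs.simple_mul_simple_self, one_mul]
    have hκred : cs.IsReduced (i :: l) := by
      unfold CoxeterSystem.IsReduced
      rw [hπκ, List.length_cons]
      omega
    have hinv : cs.IsRightInversion (π (i :: l)) (σ i) := by
      rw [hπκ]
      exact ⟨cs.isReflection_simple i, hri⟩
    obtain ⟨j, hj, hex⟩ := exchange cs hκred hinv
    rw [hπκ] at hex
    match j, hj with
    | 0, _ =>
      rw [List.eraseIdx_cons_zero, ← hl] at hex
      exact hex.symm
    | j+1, hj =>
      exfalso
      rw [List.eraseIdx_cons_succ] at hex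
      have h2 : σ i * w * σ i = π (l.eraseIdx j) := by
        rw [mul_assoc, hex, cs.wordProd_cons, ← mul_assoc, cs.simple_mul_simple_self, one_mul]
      have hlen2 : ℓ (σ i * w * σ i) ≤ (l.eraseIdx j).length := by
        rw [h2]; exact cs.length_wordProd_le _
      have hjlt : j < l.length := by
        simp only [List.length_cons] at hj
        omega
      have hle : (l.eraseIdx j).length + 1 = l.length := List.length_eraseIdx_add_one hjlt
      have hmin' := hmin (σ i)
      rw [cs.inv_simple] at hmin'
      omega
  -- head of a reduced word for w is a left descent
  have head_descent : ∀ (b : B) (l' : List B), cs.IsReduced (b :: l') → π (b :: l') = w →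
      cs.IsLeftDescent w b := by
    intro b l' hbred hbw
    unfold CoxeterSystem.IsLeftDescent
    have h1 : σ b * w = π l' := by
      rw [← hbw, cs.wordProd_cons, ← mul_assoc, cs.simple_mul_simple_self, one_mul]
    have h2 : ℓ w = l'.length + 1 := by
      rw [← hbw, hbred, List.length_cons]
    rw [h1, h2]
    have := cs.length_wordProd_le l'
    omega
  -- Step 2: every letter of any reduced word for w is a left descent of w
  have step2 : ∀ (k : ℕ) (l : List B) (hlred : cs.IsReduced l) (hlw : π l = w)
      (hk : k < l.length), cs.IsLeftDescent w (l[k]) := by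
    intro k
    induction k with
    | zero =>
      intro l hlred hlw hk
      match l, hk with
      | b :: l', _ =>
        simpa using head_descent b l' hlred hlw
    | succ k ih =>
      intro l hlred hlw hk
      match l, hk with
      | b :: l', hk =>
        have hb : cs.IsLeftDescent w b := head_descent b l' hlred hlw
        have hcom : σ b * w = w * σ b := step1 b hb
        have hπl' : π l' = σ b * w := by
          rw [← hlw, cs.wordProd_cons, ← mul_assoc, cs.simple_mul_simple_self, one_mul]
        have hπl'' : π (l' ++ [b]) = w := by
          rw [cs.wordProd_append, cs.wordProd_singleton, hπl', hcom, mul_assoc,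
            cs.simple_mul_simple_self, mul_one]
        have hl''red : cs.IsReduced (l' ++ [b]) := by
          unfold CoxeterSystem.IsReduced
          rw [hπl'', List.length_append, List.length_singleton]
          have := hlred
          unfold CoxeterSystem.IsReduced at this
          rw [hlw, List.length_cons] at this
          omega
        have hk' : k < l'.length := by
          simp only [List.length_cons] at hk
          omega
        have hk'' : k < (l' ++ [b]).length := by
          rw [List.length_append]
          omega
        have := ih (l' ++ [b]) hl''red hπl'' hk''
        have hgg : (l' ++ [b])[k] = l'[k] := List.getElem_append_left hk'
        rw [hgg] at this
        simpa using this
  -- every letter of ω is a left descent, commutes with w, gives a right inversion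
  have letters_descent : ∀ b ∈ ω, cs.IsLeftDescent w b := by
    intro b hb
    obtain ⟨k, hk, rfl⟩ := List.mem_iff_getElem.mp hb
    exact step2 k ω hred hπ.symm hk
  have letters_commute : ∀ b ∈ ω, σ b * w = w * σ b := fun b hb =>
    step1 b (letters_descent b hb)
  have simple_inversion : ∀ c ∈ ω, cs.IsRightInversion w (σ c) := fun c hc =>
    ⟨cs.isReflection_simple c, hLR c (letters_descent c hc)⟩
  -- Claim C: every reflection of the parabolic is a right inversion of w
  have claimC : ∀ (l : List B), (∀ b ∈ l, b ∈ ω) → ∀ c ∈ ω,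
      cs.IsRightInversion w (π l * σ c * (π l)⁻¹) := by
    intro l
    induction l with
    | nil =>
      intro _ c hc
      simpa using simple_inversion c hc
    | cons a m ih =>
      intro hletters c hc
      have ha : a ∈ ω := hletters a List.mem_cons_self
      have hm : ∀ b ∈ m, b ∈ ω := fun b hb => hletters b (List.mem_cons_of_mem a hb)
      set t' := π m * σ c * (π m)⁻¹ with ht'
      have hIH : cs.IsRightInversion w t' := ih hm c hc
      have key : π (a :: m) * σ c * (π (a :: m))⁻¹ = σ a * t' * σ a := by
        rw [cs.wordProd_cons, mul_inv_rev, cs.inv_simple, ht']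
        simp [mul_assoc]
      rw [key]
      by_cases hcase : t' = σ a
      · rw [hcase, cs.simple_mul_simple_self, one_mul]
        exact simple_inversion a ha
      · have ht'refl : cs.IsReflection t' := ⟨π m, c, rfl⟩
        have htrefl : cs.IsReflection (σ a * t' * σ a) := by
          have := ht'refl.conj (σ a)
          rwa [cs.inv_simple] at this
        have hne : σ a * t' * σ a ≠ σ a := fun h =>
          hcase ((conj_simple_eq_simple_iff cs a t').mp h)
        have hw' : (w * σ a) * σ a = w := by
          rw [mul_assoc, cs.simple_mul_simple_self, mul_one]
        rw [← hw', isRightInversion_mul_simple_iff cs (w * σ a) a htrefl hne, sandwich]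
        rw [← letters_commute a ha]
        apply isRightInversion_simple_mul_of cs w a hIH
        intro hcon
        apply hcase
        have h3 := (conj_eq_iff w (σ a) t').mp hcon
        rw [winv, mul_assoc, letters_commute a ha, ← mul_assoc, hw2, one_mul] at h3
        exact h3
  -- Claim D: length bound for the parabolic subgroup
  have claimD : ∀ v ∈ Subgroup.closure (cs.simple '' {b : B | b ∈ ω}), ℓ v ≤ ℓ w := by
    intro v hv
    obtain ⟨l₀, hl₀, rfl⟩ := exists_word_of_mem_closure cs hv
    obtain ⟨ν, hνred, hνπ, hνsub⟩ := exists_reduced_subword cs l₀.length l₀ le_rfl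
    rw [← hνπ, hνred]
    -- every element of ris ν is a right inversion of w, hence in ris ω
    have hsub : ∀ t ∈ cs.rightInvSeq ν, t ∈ cs.rightInvSeq ω := by
      intro t ht
      have hinv : cs.IsRightInversion w t := by
        obtain ⟨j, hj, rfl⟩ := List.mem_iff_getElem.mp ht
        have hj' : j < ν.length := by simpa using hj
        have hgd := cs.getD_rightInvSeq ν j
        rw [List.getD_eq_getElem _ _ hj] at hgd
        have hget : ν[j]? = some (ν[j]) := by
          rw [List.getElem?_eq_getElem hj']
        rw [hget] at hgd
        simp only [Option.map_some, Option.getD_some] at hgd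
        rw [hgd]
        set x := (ν.drop (j+1)).reverse with hxdef
        have hx : π x = (π (ν.drop (j+1)))⁻¹ := by
          rw [hxdef, cs.wordProd_reverse]
        have hc : ν[j] ∈ ω := hl₀ _ (hνsub _ (List.getElem_mem hj'))
        have hxletters : ∀ b ∈ x, b ∈ ω := by
          intro b hb
          rw [hxdef, List.mem_reverse] at hb
          exact hl₀ _ (hνsub b ((List.drop_sublist (j+1) ν).subset hb))
        have := claimC x hxletters (ν[j]) hc
        rwa [hx, inv_inv] at this
      rw [hπ] at hinv
      exact (isRightInversion_iff_mem_ris cs hred).mp hinv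
    classical
    have h1 : (cs.rightInvSeq ν).toFinset.card = ν.length := by
      rw [List.toFinset_card_of_nodup (hνred.nodup_rightInvSeq), cs.length_rightInvSeq]
    have h2 : (cs.rightInvSeq ν).toFinset ⊆ (cs.rightInvSeq ω).toFinset := by
      intro t htf
      rw [List.mem_toFinset] at htf ⊢
      exact hsub t htf
    have h3 : (cs.rightInvSeq ω).toFinset.card ≤ ω.length := by
      calc (cs.rightInvSeq ω).toFinset.card ≤ (cs.rightInvSeq ω).length :=
            (cs.rightInvSeq ω).toFinset_card_le
        _ = ω.length := cs.length_rightInvSeq ω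
    have h4 : ℓ w = ω.length := by rw [hπ, hred]
    have := Finset.card_le_card h2
    omega
  refine ⟨?_, claimD⟩
  apply Set.Finite.subset ((List.finite_length_le B (ℓ w)).image cs.wordProd)
  intro v hv
  obtain ⟨κ, hκlen, hκ⟩ := cs.exists_reduced_word v
  exact ⟨κ, by simp only [Set.mem_setOf_eq]; rw [← hκlen.eq, ← hκ]; exact claimD v hv, hκ.symm⟩

end Stmt7Aux

/-- If `w` is a nontrivial involution of minimal length in its conjugacy class, then the
parabolic subgroup `W_{S(w)}` generated by the letters of a reduced word for `w` is finite,
and `w` is its longest element. -/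
theorem stmt_7 {B : Type*} {W : Type*} [Group W] [Finite B] {M : CoxeterMatrix B}
    (cs : CoxeterSystem M W) (w : W) (hw2 : w * w = 1) (hw1 : w ≠ 1)
    (hmin : ∀ v : W, cs.length w ≤ cs.length (v * w * v⁻¹)) :
    ∀ ω : List B, cs.IsReduced ω → w = cs.wordProd ω →
      (Subgroup.closure (cs.simple '' {b : B | b ∈ ω}) : Set W).Finite ∧
      ∀ v ∈ Subgroup.closure (cs.simple '' {b : B | b ∈ ω}),
        cs.length v ≤ cs.length w := by
  intro ω hred hπ
  exact Stmt7Aux.main cs w hw2 hmin ω hred hπ
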